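/- For every real number q ≥ 4, the expression 1/6 − (2/3)·(√3/√q) + 1/√(3q−3) − (q−2)/q + (q−2)/√((q−1)q) is nonnegative, with equality if and only if q = 4. -/

import Mathlib

lemma keyF (a b c : ℝ) (ha : 2 ≤ a) (hb : 0 < b) (hc : 0 < c)
    (hb2 : b^2 = a^2 - 1) (hc2 : c^2 = 3) :
    (2 < a → 0 < b*c*(12 - 5*a^2) + 6*a^2 - 12*a*b + 6*a*c*(a^2-2)) ∧
    0 ≤ b*c*(12 - 5*a^2) + 6*a^2 - 12*a*b + 6*a*c*(a^2-2) := by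
  have ha0 : 0 < a := by linarith
  have hc7 : c ≤ 7/4 := by nlinarith [sq_nonneg (c - 7/4)]
  have hB : 0 < 33*a^4 + 27*a^2 - 108 - 24*c*a*(2*a^2-3) := by
    nlinarith [mul_nonneg (mul_nonneg (sub_nonneg.2 ha) (sub_nonneg.2 ha)) (sub_nonneg.2 ha),
      sq_nonneg (a-2), mul_nonneg (sub_nonneg.2 hc7) (mul_nonneg ha0.le (by nlinarith : (0:ℝ) ≤ 2*a^2-3))]
  have hX : 0 < 6*a*(a + c*(a^2-2)) := by nlinarith [mul_pos hc (show (0:ℝ) < a^2-2 by nlinarith)]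
  have hY : 0 < b*(12*a + c*(5*a^2-12)) := by
    have : 0 < 12*a + c*(5*a^2-12) := by nlinarith [mul_pos hc (show (0:ℝ) < 5*a^2-12 by nlinarith)]
    positivity
  have hid : (6*a*(a + c*(a^2-2)))^2 - (b*(12*a + c*(5*a^2-12)))^2
      = (a^2-4) * (33*a^4 + 27*a^2 - 108 - 24*c*a*(2*a^2-3)) := by
    linear_combination (-(144*a^2 + 24*a*c*(5*a^2-12) + c^2*(5*a^2-12)^2)) * hb2
      + (36*a^2*(a^2-2)^2 - (a^2-1)*(5*a^2-12)^2) * hc2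
  constructor
  · intro ha2
    have h4 : 0 < a^2 - 4 := by nlinarith
    have hXY : (b*(12*a + c*(5*a^2-12)))^2 < (6*a*(a + c*(a^2-2)))^2 := by nlinarith [mul_pos h4 hB]
    nlinarith [hXY, hX, hY]
  · have h4 : 0 ≤ a^2 - 4 := by nlinarith
    have hXY : (b*(12*a + c*(5*a^2-12)))^2 ≤ (6*a*(a + c*(a^2-2)))^2 := by nlinarith [mul_nonneg h4 hB.le]
    nlinarith [hXY, hX, hY]

theorem stmt_6 (q : ℝ) (hq : 4 ≤ q) :
    0 ≤ 1 / 6 - (2 / 3) * (Real.sqrt 3 / Real.sqrt q) + 1 / Real.sqrt (3 * q - 3)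
        - (q - 2) / q + (q - 2) / Real.sqrt ((q - 1) * q) ∧
    (1 / 6 - (2 / 3) * (Real.sqrt 3 / Real.sqrt q) + 1 / Real.sqrt (3 * q - 3)
        - (q - 2) / q + (q - 2) / Real.sqrt ((q - 1) * q) = 0 ↔ q = 4) := by
  have hq0 : (0:ℝ) < q := by linarith
  have hq1 : (0:ℝ) ≤ q - 1 := by linarith
  set a := Real.sqrt q with hA
  set b := Real.sqrt (q - 1) with hB
  set c := Real.sqrt 3 with hC
  have hc : (0:ℝ) < c := Real.sqrt_pos.mpr (by norm_num)
  have hb : (0:ℝ) < b := Real.sqrt_pos.mpr (by linarith)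
  have ha2 : a^2 = q := Real.sq_sqrt hq0.le
  have hb2 : b^2 = q - 1 := Real.sq_sqrt hq1
  have hc2 : c^2 = 3 := Real.sq_sqrt (by norm_num)
  have ha : 2 ≤ a := by
    have h4 : Real.sqrt 4 = 2 := by
      rw [show (4:ℝ) = 2^2 by norm_num, Real.sqrt_sq (by norm_num : (0:ℝ) ≤ 2)]
    calc (2:ℝ) = Real.sqrt 4 := h4.symm
    _ ≤ a := Real.sqrt_le_sqrt hq
  have ha0 : 0 < a := by linarith
  have e1 : Real.sqrt (3 * q - 3) = c * b := by
    rw [show 3 * q - 3 = 3 * (q - 1) by ring, hC, hB, Real.sqrt_mul (by norm_num : (0:ℝ) ≤ 3)]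
  have e2 : Real.sqrt ((q - 1) * q) = b * a := by
    rw [hB, hA, Real.sqrt_mul hq1]
  rw [e1, e2]
  have hb2' : b^2 = a^2 - 1 := by rw [hb2, ha2]
  obtain ⟨hstrict, hnonneg⟩ := keyF a b c ha hb hc hb2' hc2
  have hq' : q = a^2 := ha2.symm
  rw [hq']
  have hden : (0:ℝ) < 6 * a^2 * b * c := by positivity
  have hE : 1 / 6 - 2 / 3 * (c / a) + 1 / (c * b) - (a^2 - 2) / a^2 + (a^2 - 2) / (b * a)
      = (b*c*(12 - 5*a^2) + 6*a^2 - 12*a*b + 6*a*c*(a^2-2)) / (6 * a^2 * b * c) := by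
    field_simp
    linear_combination (-(12:ℝ)*a*b) * hc2
  rw [hE]
  constructor
  · exact div_nonneg hnonneg hden.le
  · rw [div_eq_zero_iff]
    constructor
    · rintro (hF | hd)
      · -- F = 0 ⇒ a = 2 ⇒ a^2 = 4
        by_contra hne
        have ha2' : 2 < a := by
          rcases lt_or_eq_of_le ha with h | h
          · exact h
          · exact absurd (by rw [← h]; norm_num) hne
        exact absurd hF (ne_of_gt (hstrict ha2'))
      · exact absurd hd (ne_of_gt hden)
    · intro h4
      left
      have haa : a = 2 := by nlinarith
      have hbb : b = c := by
        have : b^2 = c^2 := by rw [hb2', hc2, haa]; norm_num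
        nlinarith
      rw [haa, hbb]
      linear_combination (-8:ℝ) * hc2
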